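/- A unital ring (or algebra) A is classically semisimple (a finite direct sum of minimal right ideals, equivalently every module is semisimple) if and only if every maximal right ideal of A is a direct summand of A as a right A-module. -/

import Mathlib

open DirectSum LinearMap in
/-- The endomorphism ring of a finite semisimple module is a semisimple ring. -/
theorem stmt14_end_isSemisimpleRing (R M : Type*) [Ring R] [AddCommGroup M] [Module R M]
    [IsSemisimpleModule R M] [Module.Finite R M] :
    IsSemisimpleRing (Module.End R M) := by
  classical
  obtain ⟨s, hfin, hindep, hsup, hsimple⟩ :=
    ((IsSemisimpleModule.finite_tfae (R := R) (M := M)).out 0 4).mp ‹_›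
  haveI : Fintype s := hfin.fintype
  set S : s → Submodule R M := fun i => (i : Submodule R M) with hS
  have hinternal : DirectSum.IsInternal S := by
    rw [DirectSum.isInternal_submodule_iff_iSupIndep_and_iSup_eq_top]
    exact ⟨(sSupIndep_iff s).mp hindep, by rw [← sSup_eq_iSup']; exact hsup⟩
  set e : (⨁ i, S i) ≃ₗ[R] M := LinearEquiv.ofBijective (DirectSum.coeLinearMap S) hinternal
    with he
  set π : s → Module.End R M := fun i =>
    (S i).subtype ∘ₗ (DirectSum.component R s (fun i => S i) i) ∘ₗ (e.symm : M →ₗ[R] ⨁ i, S i)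
    with hπ
  have hπ_apply : ∀ i m, π i m = ((e.symm m) i : M) := fun i m => rfl
  have hcoe : ∀ v : ⨁ i, S i, DirectSum.coeLinearMap S v = ∑ i, (v i : M) := by
    intro v
    conv_lhs => rw [← DirectSum.sum_univ_of v]
    rw [map_sum]
    simp [DirectSum.coeLinearMap_of]
  have hsum : ∀ m : M, ∑ i, π i m = m := by
    intro m
    have h1 : DirectSum.coeLinearMap S (e.symm m) = m := e.apply_symm_apply m
    calc ∑ i, π i m = ∑ i, ((e.symm m) i : M) := rfl
      _ = DirectSum.coeLinearMap S (e.symm m) := (hcoe _).symm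
      _ = m := h1
  set p : s → Submodule (Module.End R M) (Module.End R M) :=
    fun i => Submodule.span (Module.End R M) {π i} with hp
  -- the key claim
  have key : ∀ (i) (χ : Module.End R M), χ * π i ≠ 0 → ∃ θ : Module.End R M,
      θ * (χ * π i) = π i := by
    intro i χ hne
    haveI : IsSimpleModule R (S i) := hsimple i i.2
    set f : S i →ₗ[R] M := χ ∘ₗ (S i).subtype with hf
    have hcomp : ∀ m, (χ * π i) m = f ((e.symm m) i) := fun m => rfl
    have hf0 : f ≠ 0 := by
      intro h0
      apply hne
      ext m
      rw [hcomp, h0]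
      rfl
    have hinj : Function.Injective f := by
      rw [← LinearMap.ker_eq_bot]
      rcases eq_bot_or_eq_top (LinearMap.ker f) with h | h
      · exact h
      · exact absurd (LinearMap.ker_eq_top.mp h) hf0
    set g : S i ≃ₗ[R] LinearMap.range f := LinearEquiv.ofInjective f hinj with hg
    obtain ⟨C, hC⟩ := exists_isCompl (LinearMap.range f)
    refine ⟨(S i).subtype ∘ₗ g.symm.toLinearMap ∘ₗ
      (LinearMap.range f).projectionOnto C hC, ?_⟩
    ext m
    have h3 : f ((e.symm m) i) = ↑(g ((e.symm m) i)) := rfl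
    show (S i).subtype (g.symm (((LinearMap.range f).projectionOnto C hC)
        ((χ * π i) m))) = π i m
    rw [hcomp m, h3, Submodule.projectionOnto_apply_left hC,
      LinearEquiv.symm_apply_apply]
    rfl
  -- each p i is semisimple
  have hpss : ∀ i, IsSemisimpleModule (Module.End R M) (p i) := by
    intro i
    by_cases hbot : p i = ⊥
    · rw [hbot]; exact (isSemisimpleModule_iff _ _).mpr Subsingleton.instComplementedLattice
    · have hatom : IsAtom (p i) := by
        refine ⟨hbot, fun N hN => ?_⟩
        by_contra hN0
        obtain ⟨ψ, hψN, hψ0⟩ := Submodule.exists_mem_ne_zero_of_ne_bot hN0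
        have hψp : ψ ∈ p i := hN.le hψN
        obtain ⟨χ, hχ⟩ := Submodule.mem_span_singleton.mp hψp
        rw [smul_eq_mul] at hχ
        obtain ⟨θ, hθ⟩ := key i χ (hχ.symm ▸ hψ0)
        have hπN : π i ∈ N := by
          rw [← hθ, hχ]
          exact N.smul_mem θ hψN
        exact absurd (Submodule.span_le.mpr (Set.singleton_subset_iff.mpr hπN)) hN.not_ge
      haveI : IsSimpleModule (Module.End R M) (p i) :=
        isSimpleModule_iff_isAtom.mpr hatom
      infer_instance
  -- the p i span
  refine isSemisimpleModule_of_isSemisimpleModule_submodule' hpss ?_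
  rw [eq_top_iff]
  intro φ _
  have hφ : φ = ∑ i, φ * π i := by
    ext m
    rw [LinearMap.sum_apply]
    simp only [Module.End.mul_apply]
    rw [← map_sum, hsum]
  rw [hφ]
  exact Submodule.sum_mem _ fun i _ => Submodule.mem_iSup_of_mem i
    (Submodule.smul_mem _ φ (Submodule.mem_span_singleton_self _))

/-- A unital ring is classically semisimple iff every maximal right ideal
(a coatom among submodules of `A` as a right `A`-module, i.e. a module over `Aᵐᵒᵖ`)
is a direct summand. -/
theorem stmt14 (A : Type*) [Ring A] :
    IsSemisimpleRing A ↔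
      ∀ I : Submodule Aᵐᵒᵖ A, IsCoatom I → ∃ J : Submodule Aᵐᵒᵖ A, IsCompl I J := by
  haveI hfin : Module.Finite Aᵐᵒᵖ A := Module.Finite.equiv (MulOpposite.opLinearEquiv Aᵐᵒᵖ).symm
  constructor
  · intro hA I _
    haveI : IsSemisimpleRing (Module.End A A) :=
      stmt14_end_isSemisimpleRing A A
    haveI : IsSemisimpleRing Aᵐᵒᵖ := (RingEquiv.moduleEndSelf A).symm.isSemisimpleRing
    haveI : IsSemisimpleModule Aᵐᵒᵖ A :=
      IsSemisimpleModule.congr (MulOpposite.opLinearEquiv Aᵐᵒᵖ)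
    exact exists_isCompl I
  · intro h
    -- first: A is semisimple as a right A-module (socle argument)
    haveI hss : IsSemisimpleModule Aᵐᵒᵖ A := by
      apply IsSemisimpleModule.of_sSup_simples_eq_top
      by_contra hne
      haveI : IsCoatomic (Submodule Aᵐᵒᵖ A) :=
        CompleteLattice.coatomic_of_top_compact
          (by rw [← Submodule.fg_iff_compact]; exact Module.finite_def.mp hfin)
      rcases (eq_top_or_exists_le_coatom
        (sSup {m : Submodule Aᵐᵒᵖ A | IsSimpleModule Aᵐᵒᵖ m})) with h' | ⟨I, hI, hle⟩
      · exact hne h'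
      · obtain ⟨J, hJ⟩ := h I hI
        have hJne : J ≠ ⊥ := by
          intro h0
          rw [h0] at hJ
          exact hI.1 (by simpa using hJ.codisjoint.eq_top)
        haveI : IsSimpleModule Aᵐᵒᵖ (A ⧸ I) := isSimpleModule_iff_isCoatom.mpr hI
        haveI : IsSimpleModule Aᵐᵒᵖ J :=
          IsSimpleModule.congr (I.quotientEquivOfIsCompl J hJ).symm
        have hJle : J ≤ I :=
          le_trans (le_sSup (by exact ‹IsSimpleModule Aᵐᵒᵖ J›)) hle
        exact hJne (hJ.disjoint.symm.eq_bot_of_le hJle)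
    haveI : IsSemisimpleRing (Module.End Aᵐᵒᵖ A) := stmt14_end_isSemisimpleRing Aᵐᵒᵖ A
    exact (RingEquiv.moduleEndSelfOp A).symm.isSemisimpleRing
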